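/- With tiles T ⊊ G, T' = T + x ≠ T, C↓ = T' \ T, C↑ = T \ T', A = T ∪ T': let d ≥ 1 and let 0 ≤ i_1 < i_2 < ⋯ < i_m ≤ d be distinct integers. Then the m-fold dagger lift (A^d \ (C_{i_1,d} ∪ ⋯ ∪ C_{i_m,d}))^{†m} is a hole in A^{d+m}, i.e. its complement in A^{d+m} is T-tilable. -/

import Mathlib

set_option linter.unusedSectionVars false
def IsCopy {G : Type*} [AddCommGroup G] {d : ℕ} (T : Set G)
    (S : Set (Fin d → G)) : Prop :=
  ∃ (j : Fin d) (y : Fin d → G),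
    S = {z | ∃ t ∈ T, z = Function.update y j (y j + t)}

def Tilable {G : Type*} [AddCommGroup G] {d : ℕ} (T : Set G)
    (X : Set (Fin d → G)) : Prop :=
  ∃ P : Set (Set (Fin d → G)),
    (∀ S ∈ P, IsCopy T S) ∧ P.PairwiseDisjoint id ∧ ⋃₀ P = X

def Cset {G : Type*} (Cdown Cup : Set G) {d : ℕ} (io : Option (Fin d)) :
    Set (Fin d → G) :=
  {z | ∀ j : Fin d, z j ∈ if (some j = io) then Cup else Cdown}

def dagger {G : Type*} (Cdown Cup : Set G) {d : ℕ} (X : Set (Fin d → G)) :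
    Set (Fin (d + 1) → G) :=
  {z | (Fin.init z ∈ X ∧ z (Fin.last d) ∈ Cdown) ∨
       ((∀ j : Fin d, z j.castSucc ∈ Cdown) ∧ z (Fin.last d) ∈ Cup)}

/-- `m` iterations of the dagger lift. -/
def daggerIter {G : Type*} (Cdown Cup : Set G) {d : ℕ} :
    (m : ℕ) → Set (Fin d → G) → Set (Fin (d + m) → G)
  | 0, X => X
  | m + 1, X => dagger Cdown Cup (daggerIter Cdown Cup m X)

section Aux
variable {G : Type*} [AddCommGroup G]

lemma tilable_empty (T : Set G) {N : ℕ} : Tilable T (∅ : Set (Fin N → G)) :=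
  ⟨∅, by simp, by simp, by simp⟩

lemma tilable_union {T : Set G} {N : ℕ} {X X' : Set (Fin N → G)}
    (hX : Tilable T X) (hX' : Tilable T X') (h : Disjoint X X') :
    Tilable T (X ∪ X') := by
  obtain ⟨P, hP1, hP2, hP3⟩ := hX
  obtain ⟨Q, hQ1, hQ2, hQ3⟩ := hX'
  refine ⟨P ∪ Q, ?_, ?_, ?_⟩
  · rintro S (hS | hS)
    exacts [hP1 S hS, hQ1 S hS]
  · rintro S (hS | hS) S' (hS' | hS') hne
    · exact hP2 hS hS' hne
    · have h1 : S ⊆ X := by rw [← hP3]; exact Set.subset_sUnion_of_mem hS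
      have h2 : S' ⊆ X' := by rw [← hQ3]; exact Set.subset_sUnion_of_mem hS'
      exact h.mono h1 h2
    · have h1 : S ⊆ X' := by rw [← hQ3]; exact Set.subset_sUnion_of_mem hS
      have h2 : S' ⊆ X := by rw [← hP3]; exact Set.subset_sUnion_of_mem hS'
      exact h.symm.mono h1 h2
    · exact hQ2 hS hS' hne
  · rw [Set.sUnion_union, hP3, hQ3]

def copyAt (T : Set G) {N : ℕ} (y : Fin N → G) (j : Fin N) : Set (Fin N → G) :=
  {z | ∃ t ∈ T, z = Function.update y j (y j + t)}

lemma isCopy_copyAt (T : Set G) {N : ℕ} (y : Fin N → G) (j : Fin N) :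
    IsCopy T (copyAt T y j) := ⟨j, y, rfl⟩

lemma mem_copyAt {T : Set G} {N : ℕ} {y z : Fin N → G} {j : Fin N} :
    z ∈ copyAt T y j ↔ (∃ t ∈ T, z j = y j + t) ∧ ∀ l, l ≠ j → z l = y l := by
  constructor
  · rintro ⟨t, ht, rfl⟩
    exact ⟨⟨t, ht, by simp⟩, fun l hl => by simp [Function.update_of_ne hl]⟩
  · rintro ⟨⟨t, ht, hj⟩, hoff⟩
    refine ⟨t, ht, funext fun l => ?_⟩
    by_cases h : l = j
    · subst h; simpa using hj
    · simp [Function.update_of_ne h, hoff l h]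

lemma tilable_fiber (T : Set G) {N : ℕ} (j0 : Fin N) (c : G)
    (Q : (Fin N → G) → Prop)
    (hQ : ∀ z w : Fin N → G, (∀ j, j ≠ j0 → z j = w j) → Q z → Q w)
    (F : Set G) (hF : F = (fun t => c + t) '' T) :
    Tilable T {z | Q z ∧ z j0 ∈ F} := by
  subst hF
  refine ⟨{S | ∃ y, Q y ∧ y j0 = c ∧ S = copyAt T y j0}, ?_, ?_, ?_⟩
  · rintro S ⟨y, _, _, rfl⟩; exact isCopy_copyAt T y j0
  · rintro S ⟨y, hQy, hyc, rfl⟩ S' ⟨y', hQy', hyc', rfl⟩ hne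
    refine Set.disjoint_left.mpr fun z hz hz' => hne ?_
    simp only [id] at hz hz'
    rw [mem_copyAt] at hz hz'
    have hyy : y = y' := funext fun l => by
      by_cases h : l = j0
      · subst h; rw [hyc, hyc']
      · rw [← hz.2 l h, hz'.2 l h]
    rw [hyy]
  · ext z
    simp only [Set.mem_sUnion, Set.mem_setOf_eq]
    constructor
    · rintro ⟨S, ⟨y, hQy, hyc, rfl⟩, hz⟩
      rw [mem_copyAt] at hz
      obtain ⟨⟨t, ht, hjt⟩, hoff⟩ := hz
      refine ⟨hQ y z (fun j hj => (hoff j hj).symm) hQy, t, ht, ?_⟩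
      rw [hjt, hyc]
    · rintro ⟨hQz, t, ht, hjt⟩
      refine ⟨copyAt T (Function.update z j0 c) j0, ⟨_, ?_, ?_, rfl⟩, ?_⟩
      · exact hQ z _ (fun j hj => (Function.update_of_ne hj c z).symm) hQz
      · simp
      · rw [mem_copyAt]
        exact ⟨⟨t, ht, by simpa using hjt.symm⟩, fun l hl => (Function.update_of_ne hl c z).symm⟩


lemma tilable_prod_left {T : Set G} {n : ℕ} {Y : Set (Fin n → G)} (hY : Tilable T Y)
    (D : Set G) :
    Tilable T {z : Fin (n + 1) → G | Fin.init z ∈ Y ∧ z (Fin.last n) ∈ D} := by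
  obtain ⟨P, hP1, hP2, hP3⟩ := hY
  refine ⟨{S' | ∃ S ∈ P, ∃ c ∈ D,
      S' = {z : Fin (n + 1) → G | Fin.init z ∈ S ∧ z (Fin.last n) = c}}, ?_, ?_, ?_⟩
  · rintro S' ⟨S, hS, c, hc, rfl⟩
    obtain ⟨j, y, rfl⟩ := hP1 S hS
    refine ⟨j.castSucc, Fin.snoc y c, ?_⟩
    have key : ∀ t : G, Function.update (Fin.snoc y c : Fin (n+1) → G) j.castSucc
        ((Fin.snoc y c : Fin (n+1) → G) j.castSucc + t)
        = Fin.snoc (Function.update y j (y j + t)) c := by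
      intro t
      rw [Fin.snoc_castSucc]
      rw [← Fin.snoc_update]
    ext z
    simp only [Set.mem_setOf_eq]
    constructor
    · rintro ⟨⟨t, ht, hin⟩, hlast⟩
      refine ⟨t, ht, ?_⟩
      have hz : z = Fin.snoc (Fin.init z) (z (Fin.last n)) := (Fin.snoc_init_self z).symm
      rw [key t, hz, hin, hlast]
    · rintro ⟨t, ht, rfl⟩
      rw [key t]
      exact ⟨by rw [Fin.init_snoc]; exact ⟨t, ht, rfl⟩, by rw [Fin.snoc_last]⟩
  · rintro S' ⟨S, hS, c, hc, rfl⟩ S'' ⟨S2, hS2, c2, hc2, rfl⟩ hne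
    refine Set.disjoint_left.mpr fun z hz hz2 => ?_
    simp only [id, Set.mem_setOf_eq] at hz hz2
    have hcc : c = c2 := by rw [← hz.2, hz2.2]
    by_cases hSS : S = S2
    · exact hne (by rw [hSS, hcc])
    · exact (hP2 hS hS2 hSS).ne_of_mem hz.1 hz2.1 rfl
  · ext z
    simp only [Set.mem_sUnion, Set.mem_setOf_eq]
    constructor
    · rintro ⟨S', ⟨S, hS, c, hc, rfl⟩, hmem⟩
      simp only [Set.mem_setOf_eq] at hmem
      have : Fin.init z ∈ Y := by rw [← hP3]; exact ⟨S, hS, hmem.1⟩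
      exact ⟨this, hmem.2 ▸ hc⟩
    · rintro ⟨hinit, hlast⟩
      rw [← hP3] at hinit
      obtain ⟨S, hS, hmem⟩ := hinit
      exact ⟨_, ⟨S, hS, z (Fin.last n), hlast, rfl⟩, hmem, rfl⟩

lemma mem_Cset_none {Cdown Cup : Set G} {N : ℕ} {z : Fin N → G} :
    z ∈ Cset Cdown Cup (none : Option (Fin N)) ↔ ∀ j, z j ∈ Cdown := by
  constructor
  · intro h j; have := h j; rwa [if_neg (by simp)] at this
  · intro h j; rw [if_neg (by simp)]; exact h j

lemma mem_Cset_some {Cdown Cup : Set G} {N : ℕ} {z : Fin N → G} {i : Fin N} :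
    z ∈ Cset Cdown Cup (some i) ↔ z i ∈ Cup ∧ ∀ j, j ≠ i → z j ∈ Cdown := by
  constructor
  · intro h
    refine ⟨?_, fun j hj => ?_⟩
    · have := h i; rwa [if_pos rfl] at this
    · have := h j; rwa [if_neg (by simp [hj])] at this
  · rintro ⟨h1, h2⟩ j
    by_cases hj : j = i
    · subst hj; rw [if_pos rfl]; exact h1
    · rw [if_neg (by simp [hj])]; exact h2 j hj

lemma Cset_map_castSucc {Cdown Cup : Set G} {N : ℕ} (io : Option (Fin N)) :
    Cset Cdown Cup (Option.map Fin.castSucc io)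
      = {z : Fin (N + 1) → G | Fin.init z ∈ Cset Cdown Cup io ∧ z (Fin.last N) ∈ Cdown} := by
  ext z
  cases io with
  | none =>
    simp only [Option.map_none, Set.mem_setOf_eq, mem_Cset_none]
    constructor
    · intro h
      exact ⟨fun j => h j.castSucc, h (Fin.last N)⟩
    · rintro ⟨h1, h2⟩ j
      refine Fin.lastCases ?_ ?_ j
      · exact h2
      · exact fun j' => h1 j'
  | some i =>
    simp only [Option.map_some, Set.mem_setOf_eq, mem_Cset_some]
    constructor
    · intro ⟨h1, h2⟩
      refine ⟨⟨h1, fun j hj => h2 j.castSucc (fun he => hj (Fin.castSucc_inj.mp he))⟩, ?_⟩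
      exact h2 (Fin.last N) (Fin.castSucc_lt_last i).ne'
    · rintro ⟨⟨h1, h2⟩, h3⟩
      refine ⟨h1, fun j hj => ?_⟩
      refine Fin.lastCases ?_ ?_ j hj
      · intro _; exact h3
      · intro j' hj'
        exact h2 j' (fun he => hj' (he ▸ rfl))

lemma dagger_sdiff {Cdown Cup : Set G} (hCupCd : Disjoint Cup Cdown) {N : ℕ}
    (X : Set (Fin N → G)) (io : Option (Fin N)) :
    dagger Cdown Cup (X \ Cset Cdown Cup io)
      = dagger Cdown Cup X \ Cset Cdown Cup (Option.map Fin.castSucc io) := by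
  rw [Cset_map_castSucc]
  ext z
  simp only [dagger, Set.mem_setOf_eq, Set.mem_diff]
  constructor
  · rintro (⟨⟨hX, hC⟩, hd⟩ | ⟨h1, h2⟩)
    · exact ⟨Or.inl ⟨hX, hd⟩, fun hc => hC hc.1⟩
    · exact ⟨Or.inr ⟨h1, h2⟩, fun hc => hCupCd.ne_of_mem h2 hc.2 rfl⟩
  · rintro ⟨⟨hX, hd⟩ | ⟨h1, h2⟩, hnc⟩
    · exact Or.inl ⟨⟨hX, fun hC => hnc ⟨hC, hd⟩⟩, hd⟩
    · exact Or.inr ⟨h1, h2⟩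

def liftm {d : ℕ} : (m : ℕ) → Option (Fin d) → Option (Fin (d + m))
  | 0, io => io
  | m + 1, io => Option.map Fin.castSucc (liftm m io)

lemma daggerIter_sdiff {Cdown Cup : Set G} (hCupCd : Disjoint Cup Cdown) {d : ℕ}
    (m : ℕ) (X : Set (Fin d → G)) (io : Option (Fin d)) :
    daggerIter Cdown Cup m (X \ Cset Cdown Cup io)
      = daggerIter Cdown Cup m X \ Cset Cdown Cup (liftm m io) := by
  induction m with
  | zero => rfl
  | succ m ih =>
    show dagger Cdown Cup _ = dagger Cdown Cup _ \ _
    rw [ih, dagger_sdiff hCupCd]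
    rfl

lemma Cset_subset_daggerIter {Cdown Cup : Set G} {d : ℕ}
    (m : ℕ) (X : Set (Fin d → G)) (io : Option (Fin d))
    (h : Cset Cdown Cup io ⊆ X) :
    Cset Cdown Cup (liftm m io) ⊆ daggerIter Cdown Cup m X := by
  induction m with
  | zero => exact h
  | succ m ih =>
    show Cset Cdown Cup (Option.map Fin.castSucc (liftm m io)) ⊆ dagger Cdown Cup _
    rw [Cset_map_castSucc]
    rintro z ⟨h1, h2⟩
    exact Or.inl ⟨ih h1, h2⟩

lemma daggerIter_subset_grid {A Cdown Cup : Set G} (hCdA : Cdown ⊆ A) (hCupA : Cup ⊆ A)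
    {d : ℕ} (m : ℕ) (X : Set (Fin d → G)) (hX : X ⊆ {z | ∀ j, z j ∈ A}) :
    daggerIter Cdown Cup m X ⊆ {z : Fin (d + m) → G | ∀ j, z j ∈ A} := by
  induction m with
  | zero => exact hX
  | succ m ih =>
    rintro z (⟨h1, h2⟩ | ⟨h1, h2⟩) <;>
    · intro j
      refine Fin.lastCases ?_ ?_ j
      · first
        | exact hCdA h2
        | exact hCupA h2
      · intro j'
        first
        | exact ih h1 j'
        | exact hCdA (h1 j')

lemma Cset_subset_grid {A Cdown Cup : Set G} (hCdA : Cdown ⊆ A) (hCupA : Cup ⊆ A)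
    {N : ℕ} (io : Option (Fin N)) :
    Cset Cdown Cup io ⊆ {z | ∀ j, z j ∈ A} := by
  intro z hz j
  have := hz j
  split at this
  · exact hCupA this
  · exact hCdA this

lemma Cset_disjoint {Cdown Cup : Set G} (hCupCd : Disjoint Cup Cdown) {N : ℕ}
    {io io' : Option (Fin N)} (hne : io ≠ io') :
    Disjoint (Cset Cdown Cup io) (Cset Cdown Cup io') := by
  refine Set.disjoint_left.mpr fun z h1 h2 => ?_
  rcases io with _ | i
  · rcases io' with _ | i'
    · exact hne rfl
    · rw [mem_Cset_none] at h1
      rw [mem_Cset_some] at h2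
      exact hCupCd.ne_of_mem h2.1 (h1 i') rfl
  · rw [mem_Cset_some] at h1
    rcases io' with _ | i'
    · rw [mem_Cset_none] at h2
      exact hCupCd.ne_of_mem h1.1 (h2 i) rfl
    · rw [mem_Cset_some] at h2
      have hii : i ≠ i' := fun h => hne (by rw [h])
      exact hCupCd.ne_of_mem h1.1 (h2.2 i hii) rfl

lemma init_agree {n : ℕ} {z w : Fin (n + 1) → G} (h : ∀ j, j ≠ Fin.last n → z j = w j) :
    Fin.init z = Fin.init w :=
  funext fun j => h j.castSucc (Fin.castSucc_lt_last j).ne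

lemma main_step (T A Cdown Cup : Set G) (x : G)
    (hA : A = T ∪ Cdown) (hCupT : Cup ⊆ T) (hTCd : Disjoint T Cdown)
    (hT' : (fun t => x + t) '' T = (T \ Cup) ∪ Cdown)
    {n : ℕ} (Y : Set (Fin n → G)) (hYA : Y ⊆ {z | ∀ j, z j ∈ A})
    (hYt : Tilable T Y) (io : Option (Fin n))
    (hdis : Disjoint Y (Cset Cdown Cup io)) :
    Tilable T ({z : Fin (n + 1) → G | ∀ j, z j ∈ A} \
      dagger Cdown Cup ({z : Fin n → G | ∀ j, z j ∈ A} \ (Y ∪ Cset Cdown Cup io))) := by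
  have hCupCd : Disjoint Cup Cdown := hTCd.mono_left hCupT
  have hTA : T ⊆ A := hA ▸ Set.subset_union_left
  have hCdA : Cdown ⊆ A := hA ▸ Set.subset_union_right
  have hT0 : T = (fun t => (0:G) + t) '' T := by simp
  have hTmA : (T \ Cup) ∪ Cdown ⊆ A := Set.union_subset (Set.diff_subset.trans hTA) hCdA
  cases io with
  | none =>
    have hEq : {z : Fin (n + 1) → G | ∀ j, z j ∈ A} \
        dagger Cdown Cup ({z : Fin n → G | ∀ j, z j ∈ A} \ (Y ∪ Cset Cdown Cup none)) =
        {z : Fin (n + 1) → G |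
            Fin.init z ∈ ({w : Fin n → G | ∀ j, w j ∈ A} \ Cset Cdown Cup none) ∧
            z (Fin.last n) ∈ T} ∪
          ({z : Fin (n + 1) → G | Fin.init z ∈ Cset Cdown Cup (none : Option (Fin n)) ∧
              z (Fin.last n) ∈ (T \ Cup) ∪ Cdown} ∪
            {z : Fin (n + 1) → G | Fin.init z ∈ Y ∧ z (Fin.last n) ∈ Cdown}) := by
      ext z
      simp only [Set.mem_diff, Set.mem_union, Set.mem_setOf_eq, dagger, not_or]
      constructor
      · rintro ⟨hzA, hnd1, hnd2⟩
        have hinitA : ∀ j : Fin n, z j.castSucc ∈ A := fun j => hzA _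
        have hb : z (Fin.last n) ∈ T ∪ Cdown := hA ▸ hzA _
        rcases hb with hbT | hbC
        · by_cases hK : ∀ j : Fin n, z j.castSucc ∈ Cdown
          · refine Or.inr (Or.inl ⟨mem_Cset_none.mpr hK, Or.inl ⟨hbT, fun hcup => ?_⟩⟩)
            exact hnd2 ⟨hK, hcup⟩
          · exact Or.inl ⟨⟨hinitA, fun hm => hK (mem_Cset_none.mp hm)⟩, hbT⟩
        · have hYK : Fin.init z ∈ Y ∪ Cset Cdown Cup none := by
            by_contra h
            exact hnd1 ⟨⟨hinitA, fun hy => h (Or.inl hy), fun hk => h (Or.inr hk)⟩, hbC⟩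
          rcases hYK with hY | hK
          · exact Or.inr (Or.inr ⟨hY, hbC⟩)
          · exact Or.inr (Or.inl ⟨hK, Or.inr hbC⟩)
      · rintro (⟨⟨hiA, hiK⟩, hbT⟩ | ⟨hiK, hb⟩ | ⟨hiY, hbC⟩)
        · refine ⟨fun j => Fin.lastCases (hTA hbT) (fun j' => hiA j') j, ?_, ?_⟩
          · rintro ⟨_, h2⟩; exact hTCd.ne_of_mem hbT h2 rfl
          · rintro ⟨h1, _⟩; exact hiK (mem_Cset_none.mpr h1)
        · have hK := mem_Cset_none.mp hiK
          refine ⟨fun j => Fin.lastCases (hTmA hb) (fun j' => hCdA (hK j')) j, ?_, ?_⟩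
          · rintro ⟨⟨_, hn⟩, _⟩; exact hn.2 hiK
          · rintro ⟨_, hcup⟩
            rcases hb with ⟨_, h⟩ | h
            · exact h hcup
            · exact hCupCd.ne_of_mem hcup h rfl
        · refine ⟨fun j => Fin.lastCases (hCdA hbC) (fun j' => hYA hiY j') j, ?_, ?_⟩
          · rintro ⟨⟨_, hn⟩, _⟩; exact hn.1 hiY
          · rintro ⟨_, hcup⟩; exact hCupCd.ne_of_mem hcup hbC rfl
    rw [hEq]
    have tB1 : Tilable T {z : Fin (n + 1) → G |
        Fin.init z ∈ ({w : Fin n → G | ∀ j, w j ∈ A} \ Cset Cdown Cup none) ∧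
        z (Fin.last n) ∈ T} := by
      refine tilable_fiber T (Fin.last n) 0 _ ?_ T hT0
      intro z w h hz
      rwa [← init_agree h]
    have tB2 : Tilable T {z : Fin (n + 1) → G |
        Fin.init z ∈ Cset Cdown Cup (none : Option (Fin n)) ∧
        z (Fin.last n) ∈ (T \ Cup) ∪ Cdown} := by
      refine tilable_fiber T (Fin.last n) x _ ?_ _ hT'.symm
      intro z w h hz
      rwa [← init_agree h]
    have tB3 : Tilable T {z : Fin (n + 1) → G | Fin.init z ∈ Y ∧ z (Fin.last n) ∈ Cdown} :=
      tilable_prod_left hYt Cdown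
    have d23 : Disjoint
        {z : Fin (n + 1) → G | Fin.init z ∈ Cset Cdown Cup (none : Option (Fin n)) ∧
          z (Fin.last n) ∈ (T \ Cup) ∪ Cdown}
        {z : Fin (n + 1) → G | Fin.init z ∈ Y ∧ z (Fin.last n) ∈ Cdown} := by
      refine Set.disjoint_left.mpr fun z hz hz' => ?_
      exact (hdis.symm).ne_of_mem hz.1 hz'.1 rfl
    have d12 : Disjoint
        {z : Fin (n + 1) → G |
          Fin.init z ∈ ({w : Fin n → G | ∀ j, w j ∈ A} \ Cset Cdown Cup none) ∧
          z (Fin.last n) ∈ T}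
        {z : Fin (n + 1) → G | Fin.init z ∈ Cset Cdown Cup (none : Option (Fin n)) ∧
          z (Fin.last n) ∈ (T \ Cup) ∪ Cdown} := by
      refine Set.disjoint_left.mpr fun z hz hz' => ?_
      exact hz.1.2 hz'.1
    have d13 : Disjoint
        {z : Fin (n + 1) → G |
          Fin.init z ∈ ({w : Fin n → G | ∀ j, w j ∈ A} \ Cset Cdown Cup none) ∧
          z (Fin.last n) ∈ T}
        {z : Fin (n + 1) → G | Fin.init z ∈ Y ∧ z (Fin.last n) ∈ Cdown} := by
      refine Set.disjoint_left.mpr fun z hz hz' => ?_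
      exact hTCd.ne_of_mem hz.2 hz'.2 rfl
    exact tilable_union tB1 (tilable_union tB2 tB3 d23)
      (Set.disjoint_union_right.mpr ⟨d12, d13⟩)
  | some i =>
    have hEq : {z : Fin (n + 1) → G | ∀ j, z j ∈ A} \
        dagger Cdown Cup ({z : Fin n → G | ∀ j, z j ∈ A} \ (Y ∪ Cset Cdown Cup (some i))) =
        {z : Fin (n + 1) → G |
            Fin.init z ∈ {w : Fin n → G | (∀ j, w j ∈ A) ∧ ¬ ∀ j, j ≠ i → w j ∈ Cdown} ∧
            z (Fin.last n) ∈ T} ∪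
          ({z : Fin (n + 1) → G |
              ((∀ j : Fin n, j ≠ i → z j.castSucc ∈ Cdown) ∧ z (Fin.last n) ∈ Cup) ∧
              z i.castSucc ∈ T} ∪
            ({z : Fin (n + 1) → G |
                ((∀ j : Fin n, j ≠ i → z j.castSucc ∈ Cdown) ∧ z i.castSucc ∈ Cup) ∧
                z (Fin.last n) ∈ (T \ Cup) ∪ Cdown} ∪
              ({z : Fin (n + 1) → G |
                  ((∀ j : Fin n, j ≠ i → z j.castSucc ∈ Cdown) ∧ z (Fin.last n) ∈ T \ Cup) ∧
                  z i.castSucc ∈ (T \ Cup) ∪ Cdown} ∪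
                {z : Fin (n + 1) → G | Fin.init z ∈ Y ∧ z (Fin.last n) ∈ Cdown}))) := by
      ext z
      simp only [Set.mem_diff, Set.mem_union, Set.mem_setOf_eq, dagger, not_or]
      constructor
      · rintro ⟨hzA, hnd1, hnd2⟩
        have hinitA : ∀ j : Fin n, z j.castSucc ∈ A := fun j => hzA _
        rcases (hA ▸ hzA (Fin.last n) : z (Fin.last n) ∈ T ∪ Cdown) with hbT | hbC
        · by_cases hDw : ∀ j : Fin n, j ≠ i → z j.castSucc ∈ Cdown
          · rcases (hA ▸ hzA i.castSucc : z i.castSucc ∈ T ∪ Cdown) with huT | huC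
            · by_cases hbCup : z (Fin.last n) ∈ Cup
              · exact Or.inr (Or.inl ⟨⟨hDw, hbCup⟩, huT⟩)
              · by_cases huCup : z i.castSucc ∈ Cup
                · exact Or.inr (Or.inr (Or.inl ⟨⟨hDw, huCup⟩, Or.inl ⟨hbT, hbCup⟩⟩))
                · exact Or.inr (Or.inr (Or.inr (Or.inl
                    ⟨⟨hDw, ⟨hbT, hbCup⟩⟩, Or.inl ⟨huT, huCup⟩⟩)))
            · have hK : ∀ j : Fin n, z j.castSucc ∈ Cdown := fun j => by
                by_cases hj : j = i
                · subst hj; exact huC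
                · exact hDw j hj
              have hbCup : z (Fin.last n) ∉ Cup := fun hc => hnd2 ⟨hK, hc⟩
              exact Or.inr (Or.inr (Or.inr (Or.inl
                ⟨⟨hDw, ⟨hbT, hbCup⟩⟩, Or.inr huC⟩)))
          · exact Or.inl ⟨⟨hinitA, hDw⟩, hbT⟩
        · have hYK : Fin.init z ∈ Y ∨ Fin.init z ∈ Cset Cdown Cup (some i) := by
            by_contra h
            push_neg at h
            exact hnd1 ⟨⟨hinitA, h.1, h.2⟩, hbC⟩
          rcases hYK with hY | hC
          · exact Or.inr (Or.inr (Or.inr (Or.inr ⟨hY, hbC⟩)))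
          · obtain ⟨hu, hrest⟩ := mem_Cset_some.mp hC
            exact Or.inr (Or.inr (Or.inl ⟨⟨hrest, hu⟩, Or.inr hbC⟩))
      · rintro (⟨⟨hiA, hiND⟩, hbT⟩ | ⟨⟨hDw, hbCup⟩, huT⟩ | ⟨⟨hDw, huCup⟩, hb⟩ |
          ⟨⟨hDw, hbT'⟩, hu⟩ | ⟨hiY, hbC⟩)
        · refine ⟨fun j => Fin.lastCases (hTA hbT) (fun j' => hiA j') j, ?_, ?_⟩
          · rintro ⟨_, h2⟩; exact hTCd.ne_of_mem hbT h2 rfl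
          · rintro ⟨h1, _⟩; exact hiND (fun j _ => h1 j)
        · refine ⟨?_, ?_, ?_⟩
          · intro j
            refine Fin.lastCases (hTA (hCupT hbCup)) (fun j' => ?_) j
            by_cases hj : j' = i
            · subst hj; exact hTA huT
            · exact hCdA (hDw j' hj)
          · rintro ⟨_, h2⟩; exact hCupCd.ne_of_mem hbCup h2 rfl
          · rintro ⟨h1, _⟩; exact hTCd.ne_of_mem huT (h1 i) rfl
        · refine ⟨?_, ?_, ?_⟩
          · intro j
            refine Fin.lastCases (hTmA hb) (fun j' => ?_) j
            by_cases hj : j' = i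
            · subst hj; exact hTA (hCupT huCup)
            · exact hCdA (hDw j' hj)
          · rintro ⟨⟨_, _, hnC⟩, _⟩
            exact hnC (mem_Cset_some.mpr ⟨huCup, hDw⟩)
          · rintro ⟨h1, _⟩; exact hCupCd.ne_of_mem huCup (h1 i) rfl
        · refine ⟨?_, ?_, ?_⟩
          · intro j
            refine Fin.lastCases (hTA hbT'.1) (fun j' => ?_) j
            by_cases hj : j' = i
            · subst hj; exact hTmA hu
            · exact hCdA (hDw j' hj)
          · rintro ⟨_, h2⟩; exact hTCd.ne_of_mem hbT'.1 h2 rfl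
          · rintro ⟨_, hcup⟩; exact hbT'.2 hcup
        · refine ⟨fun j => Fin.lastCases (hCdA hbC) (fun j' => hYA hiY j') j, ?_, ?_⟩
          · rintro ⟨⟨_, hnY, _⟩, _⟩; exact hnY hiY
          · rintro ⟨_, hcup⟩; exact hCupCd.ne_of_mem hcup hbC rfl
    rw [hEq]
    have hne1 : ∀ j : Fin n, j ≠ i → (j.castSucc : Fin (n + 1)) ≠ i.castSucc :=
      fun j hj he => hj (Fin.castSucc_inj.mp he)
    have hne2 : (Fin.last n) ≠ i.castSucc := (Fin.castSucc_lt_last i).ne'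
    have tS1 : Tilable T {z : Fin (n + 1) → G |
        Fin.init z ∈ {w : Fin n → G | (∀ j, w j ∈ A) ∧ ¬ ∀ j, j ≠ i → w j ∈ Cdown} ∧
        z (Fin.last n) ∈ T} := by
      refine tilable_fiber T (Fin.last n) 0 _ ?_ T hT0
      intro z w h hz
      rwa [← init_agree h]
    have tS2 : Tilable T {z : Fin (n + 1) → G |
        ((∀ j : Fin n, j ≠ i → z j.castSucc ∈ Cdown) ∧ z (Fin.last n) ∈ Cup) ∧
        z i.castSucc ∈ T} := by
      refine tilable_fiber T i.castSucc 0 _ ?_ T hT0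
      intro z w h hz
      exact ⟨fun j hj => h j.castSucc (hne1 j hj) ▸ hz.1 j hj, h (Fin.last n) hne2 ▸ hz.2⟩
    have tS3 : Tilable T {z : Fin (n + 1) → G |
        ((∀ j : Fin n, j ≠ i → z j.castSucc ∈ Cdown) ∧ z i.castSucc ∈ Cup) ∧
        z (Fin.last n) ∈ (T \ Cup) ∪ Cdown} := by
      refine tilable_fiber T (Fin.last n) x _ ?_ _ hT'.symm
      intro z w h hz
      refine ⟨fun j hj => ?_, ?_⟩
      · rw [← h j.castSucc (Fin.castSucc_lt_last j).ne]; exact hz.1 j hj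
      · rw [← h i.castSucc (Fin.castSucc_lt_last i).ne]; exact hz.2
    have tS4 : Tilable T {z : Fin (n + 1) → G |
        ((∀ j : Fin n, j ≠ i → z j.castSucc ∈ Cdown) ∧ z (Fin.last n) ∈ T \ Cup) ∧
        z i.castSucc ∈ (T \ Cup) ∪ Cdown} := by
      refine tilable_fiber T i.castSucc x _ ?_ _ hT'.symm
      intro z w h hz
      exact ⟨fun j hj => h j.castSucc (hne1 j hj) ▸ hz.1 j hj, h (Fin.last n) hne2 ▸ hz.2⟩
    have tS5 : Tilable T {z : Fin (n + 1) → G |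
        Fin.init z ∈ Y ∧ z (Fin.last n) ∈ Cdown} := tilable_prod_left hYt Cdown
    refine tilable_union tS1 (tilable_union tS2 (tilable_union tS3
      (tilable_union tS4 tS5 ?d45) ?d3r) ?d2r) ?d1r
    case d45 =>
      refine Set.disjoint_left.mpr fun z hz hz' => ?_
      exact hTCd.ne_of_mem hz.1.2.1 hz'.2 rfl
    case d3r =>
      refine Set.disjoint_union_right.mpr ⟨?_, ?_⟩
      · refine Set.disjoint_left.mpr fun z hz hz' => ?_
        rcases hz'.2 with h | h
        · exact h.2 hz.1.2
        · exact hCupCd.ne_of_mem hz.1.2 h rfl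
      · refine Set.disjoint_left.mpr fun z hz hz' => ?_
        exact (hdis.symm).ne_of_mem (mem_Cset_some.mpr ⟨hz.1.2, hz.1.1⟩) hz'.1 rfl
    case d2r =>
      refine Set.disjoint_union_right.mpr ⟨?_, Set.disjoint_union_right.mpr ⟨?_, ?_⟩⟩
      · refine Set.disjoint_left.mpr fun z hz hz' => ?_
        rcases hz'.2 with h | h
        · exact h.2 hz.1.2
        · exact hCupCd.ne_of_mem hz.1.2 h rfl
      · refine Set.disjoint_left.mpr fun z hz hz' => ?_
        exact hz'.1.2.2 hz.1.2
      · refine Set.disjoint_left.mpr fun z hz hz' => ?_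
        exact hCupCd.ne_of_mem hz.1.2 hz'.2 rfl
    case d1r =>
      refine Set.disjoint_union_right.mpr ⟨?_, Set.disjoint_union_right.mpr
        ⟨?_, Set.disjoint_union_right.mpr ⟨?_, ?_⟩⟩⟩
      · refine Set.disjoint_left.mpr fun z hz hz' => ?_
        exact hz.1.2 (fun j hj => hz'.1.1 j hj)
      · refine Set.disjoint_left.mpr fun z hz hz' => ?_
        exact hz.1.2 (fun j hj => hz'.1.1 j hj)
      · refine Set.disjoint_left.mpr fun z hz hz' => ?_
        exact hz.1.2 (fun j hj => hz'.1.1 j hj)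
      · refine Set.disjoint_left.mpr fun z hz hz' => ?_
        exact hTCd.ne_of_mem hz.2 hz'.2 rfl


end Aux

theorem mCsets {G : Type*} [AddCommGroup G] (T : Set G)
    (hTfin : T.Finite) (hTne : T.Nonempty) (hTprop : T ≠ Set.univ)
    (x : G) (hx : (fun t => t + x) '' T ≠ T)
    (A Cdown Cup : Set G)
    (hA : A = T ∪ (fun t => t + x) '' T)
    (hCdown : Cdown = ((fun t => t + x) '' T) \ T)
    (hCup : Cup = T \ ((fun t => t + x) '' T))
    (d : ℕ) (hd : 1 ≤ d) (m : ℕ) (I : Finset (Option (Fin d))) (hI : I.card = m) :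
    Tilable T
      ({z : Fin (d + m) → G | ∀ j, z j ∈ A} \
        daggerIter Cdown Cup m
          ({z : Fin d → G | ∀ j, z j ∈ A} \ ⋃ io ∈ I, Cset Cdown Cup io)) := by
  have hA' : A = T ∪ Cdown := by rw [hA, hCdown, Set.union_diff_self]
  have hCupT : Cup ⊆ T := hCup ▸ Set.diff_subset
  have hTCd : Disjoint T Cdown := hCdown ▸ disjoint_sdiff_self_right
  have hCupCd : Disjoint Cup Cdown := hTCd.mono_left hCupT
  have hT' : (fun t => x + t) '' T = (T \ Cup) ∪ Cdown := by
    have himg : (fun t => x + t) '' T = (fun t => t + x) '' T := by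
      apply Set.image_congr
      intro t _
      exact add_comm x t
    rw [himg, hCup, hCdown, sdiff_sdiff_right_self]
    have : T ⊓ (fun t => t + x) '' T = ((fun t => t + x) '' T) ∩ T := Set.inter_comm _ _
    rw [this, Set.inter_union_diff]
  have hTA : T ⊆ A := hA' ▸ Set.subset_union_left
  have hCdA : Cdown ⊆ A := hA' ▸ Set.subset_union_right
  have hCupA : Cup ⊆ A := hCupT.trans hTA
  induction m generalizing I with
  | zero =>
    have hIe : I = ∅ := Finset.card_eq_zero.mp hI
    subst hIe
    have : ({z : Fin d → G | ∀ j, z j ∈ A} \ ⋃ io ∈ (∅ : Finset (Option (Fin d))),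
        Cset Cdown Cup io) = {z : Fin d → G | ∀ j, z j ∈ A} := by simp
    rw [this]
    show Tilable T ({z : Fin (d + 0) → G | ∀ j, z j ∈ A} \ {z : Fin d → G | ∀ j, z j ∈ A})
    have he : ({z : Fin (d + 0) → G | ∀ j, z j ∈ A} \ {z : Fin d → G | ∀ j, z j ∈ A}) = ∅ :=
      Set.diff_eq_empty.mpr (fun z hz => hz)
    rw [he]
    exact tilable_empty T
  | succ m ih =>
    obtain ⟨io, hio⟩ := Finset.card_pos.mp (by omega : 0 < I.card)
    have hI' : (I.erase io).card = m := by
      rw [Finset.card_erase_of_mem hio, hI]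
      omega
    have hXsplit : ({z : Fin d → G | ∀ j, z j ∈ A} \ ⋃ io' ∈ I, Cset Cdown Cup io')
        = (({z : Fin d → G | ∀ j, z j ∈ A} \ ⋃ io' ∈ I.erase io, Cset Cdown Cup io')
            \ Cset Cdown Cup io) := by
      rw [Set.diff_diff]
      congr 1
      rw [← Finset.insert_erase hio, Finset.set_biUnion_insert, Set.union_comm]
      simp [Finset.erase_insert_of_ne, Finset.insert_erase hio]
    rw [hXsplit]
    show Tilable T _
    have hrec : daggerIter Cdown Cup (m + 1)
        (({z : Fin d → G | ∀ j, z j ∈ A} \ ⋃ io' ∈ I.erase io, Cset Cdown Cup io')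
          \ Cset Cdown Cup io)
        = dagger Cdown Cup
          ((daggerIter Cdown Cup m
            ({z : Fin d → G | ∀ j, z j ∈ A} \ ⋃ io' ∈ I.erase io, Cset Cdown Cup io'))
            \ Cset Cdown Cup (liftm m io)) := by
      show dagger Cdown Cup _ = _
      rw [daggerIter_sdiff hCupCd]
    rw [hrec]
    set Xm := daggerIter Cdown Cup m
      ({z : Fin d → G | ∀ j, z j ∈ A} \ ⋃ io' ∈ I.erase io, Cset Cdown Cup io') with hXm
    have hXmgrid : Xm ⊆ {z : Fin (d + m) → G | ∀ j, z j ∈ A} :=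
      daggerIter_subset_grid hCdA hCupA m _ Set.diff_subset
    have hCsub : Cset Cdown Cup (liftm m io) ⊆ Xm := by
      apply Cset_subset_daggerIter
      rw [Set.subset_diff]
      refine ⟨Cset_subset_grid hCdA hCupA io, ?_⟩
      refine Set.disjoint_left.mpr fun z hz hz' => ?_
      simp only [Set.mem_iUnion] at hz'
      obtain ⟨io', hio', hzio'⟩ := hz'
      exact (Cset_disjoint hCupCd (fun h => (Finset.ne_of_mem_erase hio') h.symm)).ne_of_mem
        hz hzio' rfl
    have hYt : Tilable T ({z : Fin (d + m) → G | ∀ j, z j ∈ A} \ Xm) := ih (I.erase io) hI'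
    have hXmY : Xm \ Cset Cdown Cup (liftm m io)
        = {z : Fin (d + m) → G | ∀ j, z j ∈ A} \
            (({z : Fin (d + m) → G | ∀ j, z j ∈ A} \ Xm) ∪ Cset Cdown Cup (liftm m io)) := by
      rw [← Set.diff_diff, Set.diff_diff_cancel_left hXmgrid]
    rw [hXmY]
    exact main_step T A Cdown Cup x hA' hCupT hTCd hT' _ Set.diff_subset hYt
      (liftm m io)
      (Set.disjoint_left.mpr fun z hz hz' => hz.2 (hCsub hz'))
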